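/- Fix r : ℕ → Bool. For finite binary strings p, q of the same length n, define code(p,q) to be the binary string s of length n with s(N) = true iff (p(N) = true and q(N) = true) or (N = k_j for some j < M with r(j) = true), where k_0 < ... < k_{M-1} is the increasing enumeration of {N < n : p(N) = false}. Let D be any dense set of finite binary strings, i.e. every finite binary string has an extension in D. Then for every pair (p,q) of finite binary strings of the same length there exists a pair (p̄,q̄) of finite binary strings of the same length, with p̄ extending p and q̄ extending q, such that code(p̄,q̄) extends some element of D. -/

import Mathlib

/-- The increasing enumeration of the positions `N < p.length` where `p N = false`,
as a (sorted) list of natural numbers. -/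
def falseIdx (p : List Bool) : List ℕ :=
  (List.range p.length).filter (fun N => p.getD N true = false)

/-- `codePred r p q N` holds iff `p N = true` and `q N = true`, or `N = k_j` for some
`j < M` with `r j = true`, where `k_0 < ... < k_{M-1}` enumerates `{N < p.length : p N = false}`. -/
def codePred (r : ℕ → Bool) (p q : List Bool) (N : ℕ) : Prop :=
  (p.getD N false = true ∧ q.getD N false = true) ∨
    ∃ j < (falseIdx p).length, N = (falseIdx p).getD j 0 ∧ r j = true

instance (r : ℕ → Bool) (p q : List Bool) (N : ℕ) : Decidable (codePred r p q N) := by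
  unfold codePred; infer_instance

/-- The binary string `code r p q` of length `p.length` whose `N`-th value is `true` iff
`codePred r p q N`. -/
def code (r : ℕ → Bool) (p q : List Bool) : List Bool :=
  (List.range p.length).map (fun N => decide (codePred r p q N))

lemma mem_falseIdx_lt {p : List Bool} {N : ℕ} (h : N ∈ falseIdx p) : N < p.length := by
  unfold falseIdx at h
  rw [List.mem_filter, List.mem_range] at h
  exact h.1

lemma falseIdx_append_true (p : List Bool) (k : ℕ) :
    falseIdx (p ++ List.replicate k true) = falseIdx p := by
  unfold falseIdx
  rw [List.length_append, List.length_replicate, List.range_add, List.filter_append]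
  have h1 : List.filter (fun N => decide ((p ++ List.replicate k true).getD N true = false))
      (List.range p.length) = List.filter (fun N => decide (p.getD N true = false))
      (List.range p.length) := by
    apply List.filter_congr
    intro N hN
    rw [List.mem_range] at hN
    rw [List.getD_append p _ true N hN]
  have h2 : List.filter (fun N => decide ((p ++ List.replicate k true).getD N true = false))
      (List.map (fun x => p.length + x) (List.range k)) = [] := by
    rw [List.filter_eq_nil_iff]
    intro a ha
    rw [List.mem_map] at ha
    obtain ⟨i, hi, rfl⟩ := ha
    rw [List.mem_range] at hi
    simp only [decide_eq_true_eq]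
    rw [List.getD_append_right p _ true _ (Nat.le_add_right _ _)]
    simp [Nat.add_sub_cancel_left, List.getD, List.getElem?_replicate, hi]
  rw [h1, h2, List.append_nil]

/-- The density statement (*) of Theorem 4.3: if `D` is a dense set of finite binary
strings (every string has an extension in `D`), then every pair `(p, q)` of strings of
the same length has an extension `(p̄, q̄)`, of a common length, such that
`code r p̄ q̄` extends some element of `D`. -/
theorem density_of_code (r : ℕ → Bool) (D : Set (List Bool))
    (hD : ∀ s : List Bool, ∃ t ∈ D, s <+: t)
    (p q : List Bool) (hpq : p.length = q.length) :
    ∃ pbar qbar : List Bool, pbar.length = qbar.length ∧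
      p <+: pbar ∧ q <+: qbar ∧ ∃ d ∈ D, d <+: code r pbar qbar := by
  obtain ⟨d, hdD, hcd⟩ := hD (code r p q)
  have hclen : (code r p q).length = p.length := by simp [code]
  have hple : p.length ≤ d.length := hclen ▸ hcd.length_le
  obtain ⟨k, hk⟩ : ∃ k, d.length = p.length + k := ⟨d.length - p.length, by omega⟩
  refine ⟨p ++ List.replicate k true, q ++ d.drop p.length,
    by simp; omega, List.prefix_append _ _, List.prefix_append _ _, d, hdD, ?_⟩
  have hfi : falseIdx (p ++ List.replicate k true) = falseIdx p := falseIdx_append_true p k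
  have key : code r (p ++ List.replicate k true) (q ++ d.drop p.length) = d := by
    apply List.ext_getElem
    · simp [code]; omega
    · intro n h1 h2
      have hn : n < d.length := h2
      simp only [code, List.getElem_map, List.getElem_range]
      by_cases hnp : n < p.length
      · have hcodep : codePred r (p ++ List.replicate k true) (q ++ d.drop p.length) n
            ↔ codePred r p q n := by
          unfold codePred
          rw [hfi, List.getD_append p _ false n hnp, List.getD_append q _ false n (hpq ▸ hnp)]
        have hcl : n < (code r p q).length := by omega
        have hd : d.getD n false = (code r p q).getD n false := by
          rw [List.getD_eq_getElem _ _ hn, List.getD_eq_getElem _ _ hcl, hcd.getElem hcl]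
        have hcn : (code r p q).getD n false = decide (codePred r p q n) := by
          rw [List.getD_eq_getElem _ _ hcl]; simp [code]
        rw [decide_eq_decide.mpr hcodep, ← List.getD_eq_getElem d false hn, hd, hcn]
      · have hnp' : p.length ≤ n := not_lt.mp hnp
        have hpt : (p ++ List.replicate k true).getD n false = true := by
          rw [List.getD_append_right p _ false _ hnp']
          have hn' : n < p.length + k := hk ▸ hn
          have hlt : n - p.length < k := by omega
          simp [List.getD, List.getElem?_replicate, hlt]
        have hqd : (q ++ d.drop p.length).getD n false = d.getD n false := by
          rw [List.getD_append_right q _ false _ (hpq ▸ hnp'), ← hpq]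
          simp only [List.getD, List.getElem?_drop, Nat.add_sub_cancel' hnp']
        have hfalse : ∀ j < (falseIdx (p ++ List.replicate k true)).length,
            n ≠ (falseIdx (p ++ List.replicate k true)).getD j 0 := by
          intro j hj hne
          rw [hfi] at hj hne
          have hmem : (falseIdx p).getD j 0 ∈ falseIdx p := by
            rw [List.getD_eq_getElem _ _ hj]; exact List.getElem_mem _
          have := mem_falseIdx_lt hmem
          omega
        have hiff : codePred r (p ++ List.replicate k true) (q ++ d.drop p.length) n
            ↔ d.getD n false = true := by
          unfold codePred
          constructor
          · rintro (⟨_, h⟩ | ⟨j, hj, hne, _⟩)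
            · rw [← hqd]; exact h
            · exact absurd hne (hfalse j hj)
          · intro h; exact Or.inl ⟨hpt, hqd ▸ h⟩
        have hdn : d.getD n false = d[n] := by
          simp [List.getD, List.getElem?_eq_getElem hn]
        rw [hdn] at hiff
        cases hb : d[n] <;> rw [hb] at hiff <;> simp [hiff]
  exact ⟨[], by simp [key]⟩
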